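/- Let {P(t)} be an i.i.d. sequence of m×m doubly stochastic random matrices and define v(t+1) = P(t)v(t) − (𝟙/m)·(𝟙ᵀv(t)) starting from a vector v(0) orthogonal to 𝟙. If each P(t) is symmetric, then E[‖v(t+1)‖²] ≤ λ₂(E[P(t)²])·E[‖v(t)‖²], and hence E[‖v(t)‖²] ≤ ‖v(0)‖²·λ₂(E[P(t)²])^t, where λ₂ denotes the second-largest eigenvalue. -/

import Mathlib

open MeasureTheory ProbabilityTheory

instance {m : ℕ} : MeasurableSpace (Matrix (Fin m) (Fin m) ℝ) :=
  (MeasurableSpace.pi : MeasurableSpace ((Fin m) → (Fin m) → ℝ))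

theorem consensus_contraction_stochastic
    {m : ℕ} (hm : 1 ≤ m)
    {Ω : Type*} [MeasurableSpace Ω] (μ : Measure Ω) [IsProbabilityMeasure μ]
    (P : ℕ → Ω → Matrix (Fin m) (Fin m) ℝ)
    (hPmeas : ∀ t, Measurable (P t))
    (hsymm : ∀ t, ∀ᵐ ω ∂μ, (P t ω).IsSymm)
    (hnonneg : ∀ t, ∀ᵐ ω ∂μ, ∀ i j, 0 ≤ P t ω i j)
    (hrow : ∀ t, ∀ᵐ ω ∂μ, ∀ i, ∑ j, P t ω i j = 1)
    (hcol : ∀ t, ∀ᵐ ω ∂μ, ∀ j, ∑ i, P t ω i j = 1)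
    (hident : ∀ t, Measure.map (P t) μ = Measure.map (P 0) μ)
    (v : ℕ → Ω → (Fin m → ℝ)) (v0 : Fin m → ℝ)
    (hv0 : ∀ ω, v 0 ω = v0) (horth : ∑ i, v0 i = 0)
    (hvmeas : ∀ t, Measurable (v t))
    (hindep : ∀ t, IndepFun (P t) (v t) μ)
    (hrec : ∀ t ω, v (t + 1) ω =
      (P t ω).mulVec (v t ω) - (1 / (m : ℝ)) • (fun _ => ∑ i, v t ω i))
    (M : Matrix (Fin m) (Fin m) ℝ)
    (hM : ∀ i j, M i j = ∫ ω, ((P 0 ω) * (P 0 ω)) i j ∂μ)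
    (lam2 : ℝ) (hlam2nonneg : 0 ≤ lam2)
    (hlam2 : ∀ w : Fin m → ℝ, ∑ i, w i = 0 →
      dotProduct w (M.mulVec w) ≤ lam2 * ∑ i, (w i) ^ 2) :
    (∀ t, (∫ ω, ∑ i, (v (t + 1) ω i) ^ 2 ∂μ) ≤
        lam2 * ∫ ω, ∑ i, (v t ω i) ^ 2 ∂μ) ∧
    (∀ t, (∫ ω, ∑ i, (v t ω i) ^ 2 ∂μ) ≤ (∑ i, (v0 i) ^ 2) * lam2 ^ t) := by
  classical
  set B : ℝ := ∑ i, |v0 i| with hBdef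
  -- basic measurability
  have hmeasvi : ∀ t (i : Fin m), Measurable fun ω => v t ω i :=
    fun t i => (measurable_pi_apply i).comp (hvmeas t)
  have hmeasPij : ∀ t (i j : Fin m), Measurable fun ω => P t ω i j :=
    fun t i j => (measurable_pi_apply j).comp ((measurable_pi_apply i).comp (hPmeas t))
  have f2meas : ∀ (j k : Fin m), Measurable fun A : Matrix (Fin m) (Fin m) ℝ => (A * A) j k := by
    intro j k
    simp only [Matrix.mul_apply]
    exact Finset.measurable_sum _ fun l _ =>
      ((measurable_pi_apply l).comp (measurable_pi_apply j)).fun_mul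
        ((measurable_pi_apply k).comp (measurable_pi_apply l))
  have gmeas : ∀ (j k : Fin m), Measurable fun w : Fin m → ℝ => w j * w k :=
    fun j k => (measurable_pi_apply j).mul (measurable_pi_apply k)
  -- entries of P are in [0,1] a.e.
  have hP01 : ∀ t, ∀ᵐ ω ∂μ, ∀ i j, 0 ≤ P t ω i j ∧ P t ω i j ≤ 1 := by
    intro t
    filter_upwards [hnonneg t, hrow t] with ω hnn hr i j
    refine ⟨hnn i j, ?_⟩
    calc P t ω i j ≤ ∑ j', P t ω i j' :=
          Finset.single_le_sum (fun j' _ => hnn i j') (Finset.mem_univ j)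
      _ = 1 := hr i
  -- a.e. invariant: sum zero and boundedness by B
  have hbound : ∀ t, ∀ᵐ ω ∂μ, (∑ i, v t ω i = 0) ∧ ∀ i, |v t ω i| ≤ B := by
    intro t
    induction t with
    | zero =>
      refine Filter.Eventually.of_forall fun ω => ?_
      rw [hv0]
      exact ⟨horth, fun i =>
        (le_abs_self _).trans <| by
          simpa using Finset.single_le_sum (f := fun i => |v0 i|)
            (fun i _ => abs_nonneg _) (Finset.mem_univ i)⟩
    | succ t ih =>
      filter_upwards [ih, hnonneg t, hrow t, hcol t] with ω hih hnn hr hc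
      have hv1 : v (t + 1) ω = (P t ω).mulVec (v t ω) := by
        rw [hrec]; simp only [hih.1]; simp
        exact Or.inr rfl
      constructor
      · rw [hv1]
        simp only [Matrix.mulVec, dotProduct]
        rw [Finset.sum_comm]
        calc (∑ j, ∑ i, P t ω i j * v t ω j)
            = ∑ j, (∑ i, P t ω i j) * v t ω j := by
              simp [Finset.sum_mul]
          _ = ∑ j, v t ω j := by
              refine Finset.sum_congr rfl fun j _ => by rw [hc j, one_mul]
          _ = 0 := hih.1
      · intro i
        rw [hv1]
        simp only [Matrix.mulVec, dotProduct]
        calc |∑ j, P t ω i j * v t ω j| ≤ ∑ j, |P t ω i j * v t ω j| :=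
              Finset.abs_sum_le_sum_abs _ _
          _ ≤ ∑ j, P t ω i j * B := by
              refine Finset.sum_le_sum fun j _ => ?_
              rw [abs_mul, abs_of_nonneg (hnn i j)]
              exact mul_le_mul_of_nonneg_left (hih.2 j) (hnn i j)
          _ = (∑ j, P t ω i j) * B := by rw [Finset.sum_mul]
          _ = B := by rw [hr i, one_mul]
  have hrec' : ∀ t, ∀ᵐ ω ∂μ, v (t + 1) ω = (P t ω).mulVec (v t ω) := by
    intro t
    filter_upwards [hbound t] with ω h
    rw [hrec]; simp only [h.1]; simp
    exact Or.inr rfl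
  -- integrability of products of coordinates
  have hint_vv : ∀ t (i j : Fin m), Integrable (fun ω => v t ω i * v t ω j) μ := by
    intro t i j
    refine (integrable_const (B * B)).mono'
      ((hmeasvi t i).mul (hmeasvi t j)).aestronglyMeasurable ?_
    filter_upwards [hbound t] with ω h
    have hB0 : (0:ℝ) ≤ B := (abs_nonneg _).trans (h.2 i)
    calc ‖v t ω i * v t ω j‖ = |v t ω i| * |v t ω j| := by
          simp [abs_mul]
      _ ≤ B * B := mul_le_mul (h.2 i) (h.2 j) (abs_nonneg _) hB0
  have hint_sumsq : ∀ t, Integrable (fun ω => ∑ i, (v t ω i) ^ 2) μ := by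
    intro t
    refine integrable_finset_sum _ fun i _ => ?_
    simpa [sq] using hint_vv t i i
  -- the mean of (P t)^2 entries equals M
  have hPPint : ∀ t (j k : Fin m), (∫ ω, ((P t ω) * (P t ω)) j k ∂μ) = M j k := by
    intro t j k
    rw [hM]
    have h1 : (∫ ω, ((P t ω) * (P t ω)) j k ∂μ)
        = ∫ A, (A * A) j k ∂(Measure.map (P t) μ) :=
      (integral_map (hPmeas t).aemeasurable (f2meas j k).aestronglyMeasurable).symm
    have h2 : (∫ ω, ((P 0 ω) * (P 0 ω)) j k ∂μ)
        = ∫ A, (A * A) j k ∂(Measure.map (P 0) μ) :=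
      (integral_map (hPmeas 0).aemeasurable (f2meas j k).aestronglyMeasurable).symm
    rw [h1, h2, hident t]
  -- algebraic identity
  have alg : ∀ (A : Matrix (Fin m) (Fin m) ℝ), A.IsSymm → ∀ w : Fin m → ℝ,
      ∑ i, (A.mulVec w i) ^ 2 = ∑ j, ∑ k, (A * A) j k * (w j * w k) := by
    intro A hA w
    simp only [Matrix.mulVec, dotProduct, Matrix.mul_apply, sq,
      Finset.sum_mul, Finset.mul_sum]
    rw [Finset.sum_comm]
    refine Finset.sum_congr rfl fun j _ => ?_
    rw [Finset.sum_comm]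
    refine Finset.sum_congr rfl fun k _ => Finset.sum_congr rfl fun i _ => ?_
    rw [hA.apply j i]
    ring
  -- contraction step
  have key : ∀ t, (∫ ω, ∑ i, (v (t + 1) ω i) ^ 2 ∂μ) ≤
      lam2 * ∫ ω, ∑ i, (v t ω i) ^ 2 ∂μ := by
    intro t
    have hintPPvv : ∀ (j k : Fin m),
        Integrable (fun ω => ((P t ω) * (P t ω)) j k * (v t ω j * v t ω k)) μ := by
      intro j k
      refine (integrable_const (B * B)).mono'
        (((f2meas j k).comp (hPmeas t)).mul
          ((hmeasvi t j).mul (hmeasvi t k))).aestronglyMeasurable ?_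
      filter_upwards [hbound t, hP01 t, hrow t] with ω h hP hr
      have hB0 : (0:ℝ) ≤ B := (abs_nonneg _).trans (h.2 j)
      have hPP : |((P t ω) * (P t ω)) j k| ≤ 1 := by
        rw [Matrix.mul_apply, abs_of_nonneg (Finset.sum_nonneg fun l _ =>
          mul_nonneg (hP j l).1 (hP l k).1)]
        calc (∑ l, P t ω j l * P t ω l k) ≤ ∑ l, P t ω j l * 1 :=
              Finset.sum_le_sum fun l _ =>
                mul_le_mul_of_nonneg_left (hP l k).2 (hP j l).1
          _ = ∑ l, P t ω j l := by simp
          _ = 1 := hr j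
      calc ‖((P t ω) * (P t ω)) j k * (v t ω j * v t ω k)‖
          = |((P t ω) * (P t ω)) j k| * (|v t ω j| * |v t ω k|) := by
            simp [abs_mul]
        _ ≤ 1 * (B * B) := by
            refine mul_le_mul hPP (mul_le_mul (h.2 j) (h.2 k) (abs_nonneg _) hB0)
              (mul_nonneg (abs_nonneg _) (abs_nonneg _)) zero_le_one
        _ = B * B := one_mul _
    have hintQ : Integrable (fun ω => ∑ j, ∑ k, M j k * (v t ω j * v t ω k)) μ :=
      integrable_finset_sum _ fun j _ => integrable_finset_sum _ fun k _ =>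
        (hint_vv t j k).const_mul _
    calc (∫ ω, ∑ i, (v (t + 1) ω i) ^ 2 ∂μ)
        = ∫ ω, ∑ j, ∑ k, ((P t ω) * (P t ω)) j k * (v t ω j * v t ω k) ∂μ := by
          refine integral_congr_ae ?_
          filter_upwards [hrec' t, hsymm t] with ω hω hs
          rw [hω]; exact alg _ hs _
      _ = ∑ j, ∑ k, ∫ ω, ((P t ω) * (P t ω)) j k * (v t ω j * v t ω k) ∂μ := by
          rw [integral_finset_sum _ fun j _ =>
            integrable_finset_sum _ fun k _ => hintPPvv j k]
          exact Finset.sum_congr rfl fun j _ =>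
            integral_finset_sum _ fun k _ => hintPPvv j k
      _ = ∑ j, ∑ k, M j k * ∫ ω, v t ω j * v t ω k ∂μ := by
          refine Finset.sum_congr rfl fun j _ => Finset.sum_congr rfl fun k _ => ?_
          have hind := ((hindep t).comp (f2meas j k) (gmeas j k)).integral_fun_mul_eq_mul_integral
            (((f2meas j k).comp (hPmeas t)).aestronglyMeasurable)
            (((gmeas j k).comp (hvmeas t)).aestronglyMeasurable)
          calc (∫ ω, ((P t ω) * (P t ω)) j k * (v t ω j * v t ω k) ∂μ)
              = (∫ ω, ((P t ω) * (P t ω)) j k ∂μ) * ∫ ω, v t ω j * v t ω k ∂μ := hind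
            _ = M j k * ∫ ω, v t ω j * v t ω k ∂μ := by rw [hPPint t j k]
      _ = ∫ ω, ∑ j, ∑ k, M j k * (v t ω j * v t ω k) ∂μ := by
          rw [integral_finset_sum (f := fun j ω => ∑ k, M j k * (v t ω j * v t ω k)) _ fun j _ =>
            integrable_finset_sum _ fun k _ => (hint_vv t j k).const_mul _]
          refine Finset.sum_congr rfl fun j _ => ?_
          rw [integral_finset_sum _ fun k _ => (hint_vv t j k).const_mul _]
          exact Finset.sum_congr rfl fun k _ => (integral_const_mul _ _).symm
      _ ≤ ∫ ω, lam2 * ∑ i, (v t ω i) ^ 2 ∂μ := by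
          refine integral_mono_ae hintQ ((hint_sumsq t).const_mul lam2) ?_
          filter_upwards [hbound t] with ω h
          have hq : dotProduct (v t ω) (M.mulVec (v t ω))
              = ∑ j, ∑ k, M j k * (v t ω j * v t ω k) := by
            simp only [dotProduct, Matrix.mulVec, Finset.mul_sum]
            exact Finset.sum_congr rfl fun j _ =>
              Finset.sum_congr rfl fun k _ => by ring
          calc (∑ j, ∑ k, M j k * (v t ω j * v t ω k))
              = dotProduct (v t ω) (M.mulVec (v t ω)) := hq.symm
            _ ≤ lam2 * ∑ i, (v t ω i) ^ 2 := hlam2 _ h.1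
      _ = lam2 * ∫ ω, ∑ i, (v t ω i) ^ 2 ∂μ := integral_const_mul _ _
  refine ⟨key, ?_⟩
  intro t
  induction t with
  | zero =>
    have : (∫ ω, ∑ i, (v 0 ω i) ^ 2 ∂μ) = ∑ i, (v0 i) ^ 2 := by
      simp [hv0]
    rw [this]; simp
  | succ t ih =>
    calc (∫ ω, ∑ i, (v (t + 1) ω i) ^ 2 ∂μ) ≤ lam2 * ∫ ω, ∑ i, (v t ω i) ^ 2 ∂μ := key t
      _ ≤ lam2 * ((∑ i, (v0 i) ^ 2) * lam2 ^ t) :=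
          mul_le_mul_of_nonneg_left ih hlam2nonneg
      _ = (∑ i, (v0 i) ^ 2) * lam2 ^ (t + 1) := by ring
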